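/- Improved Cheeger inequality for bounded forms: Suppose J is symmetric, K = 0, and ‖J(·,E)‖_op ≤ M < ∞ (i.e., J(dx,E) ≤ M π(dx)). Let k' = inf_{0<π(A)≤1/2} J(A×Aᶜ)/π(A). Then the spectral gap satisfies λ₁ ≥ M(1 − √(1 − k'²/M²)) = k'²/(M(1 + √(1 − k'²/M²))) ≥ k'²/(2M). -/

import Mathlib

open MeasureTheory Set ENNReal

/-- Each real measurable function has a median w.r.t. a probability measure. -/
lemma aux_median {E : Type*} [MeasurableSpace E] (π : Measure E) [IsProbabilityMeasure π]
    (f : E → ℝ) (hf : Measurable f) :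
    ∃ c : ℝ, π {x | f x < c} ≤ 1 / 2 ∧ π {x | c < f x} ≤ 1 / 2 := by
  set μ : Measure ℝ := π.map f with hμ
  haveI : IsProbabilityMeasure μ := Measure.isProbabilityMeasure_map hf.aemeasurable
  set S : Set ℝ := {t | 1 / 2 ≤ μ (Iic t)} with hS
  have hhalf : (1/2 : ℝ≥0∞) < 1 := ENNReal.half_lt_self one_ne_zero one_ne_top
  -- S is nonempty
  have hSne : S.Nonempty := by
    have h1 : Filter.Tendsto (fun x : ℝ => μ (Iic x)) Filter.atTop (nhds (μ univ)) :=
      tendsto_measure_Iic_atTop μ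
    rw [measure_univ] at h1
    obtain ⟨t, ht⟩ := (h1.eventually (eventually_ge_nhds hhalf)).exists
    exact ⟨t, ht⟩
  -- S is bounded below
  have hSbdd : BddBelow S := by
    have h2 : Filter.Tendsto (fun n : ℕ => μ (Iic (-(n:ℝ)))) Filter.atTop (nhds 0) := by
      have h3 : Filter.Tendsto (μ ∘ fun n : ℕ => Iic (-(n:ℝ))) Filter.atTop
          (nhds (μ (⋂ n : ℕ, Iic (-(n:ℝ))))) := by
        refine tendsto_measure_iInter_atTop
          (fun n => (measurableSet_Iic).nullMeasurableSet)
          (fun n m hnm => Iic_subset_Iic.2 (by exact_mod_cast neg_le_neg (by exact_mod_cast hnm)))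
          ⟨0, measure_ne_top _ _⟩
      have h4 : (⋂ n : ℕ, Iic (-(n:ℝ))) = ∅ := by
        ext x
        simp only [mem_iInter, mem_Iic, mem_empty_iff_false, iff_false, not_forall, not_le]
        obtain ⟨n, hn⟩ := exists_nat_gt (-x)
        exact ⟨n, by linarith⟩
      rw [h4, measure_empty] at h3
      exact h3
    obtain ⟨n0, hn0⟩ := (h2.eventually (eventually_lt_nhds (ENNReal.half_pos one_ne_zero))).exists
    refine ⟨-(n0:ℝ), fun t ht => ?_⟩
    by_contra hlt
    push_neg at hlt
    exact absurd (le_trans ht (measure_mono (Iic_subset_Iic.2 hlt.le))) (not_le.2 hn0)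
  set c := sInf S with hc
  have hIoi : ∀ u ∈ S, μ (Ioi u) ≤ 1/2 := by
    intro u hu
    have h5 : μ (Ioi u) = 1 - μ (Iic u) := by
      rw [← compl_Iic, measure_compl measurableSet_Iic (measure_ne_top _ _), measure_univ]
    rw [h5]
    rw [tsub_le_iff_right]
    calc (1:ℝ≥0∞) = 1/2 + 1/2 := (ENNReal.add_halves 1).symm
      _ ≤ 1/2 + μ (Iic u) := add_le_add_right hu _
  refine ⟨c, ?_, ?_⟩
  · -- π {f < c} = μ (Iio c) ≤ 1/2
    have hmap : π {x | f x < c} = μ (Iio c) := by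
      rw [hμ, Measure.map_apply hf measurableSet_Iio]; rfl
    rw [hmap]
    have hun : Iio c = ⋃ n : ℕ, Iic (c - 1/(n+1)) := by
      ext x
      simp only [mem_Iio, mem_iUnion, mem_Iic]
      constructor
      · intro hx
        obtain ⟨n, hn⟩ := exists_nat_one_div_lt (sub_pos.2 hx)
        exact ⟨n, by push_cast at hn ⊢; linarith⟩
      · rintro ⟨n, hn⟩
        have : (0:ℝ) < 1/(n+1) := by positivity
        linarith
    have hmono : Monotone fun n : ℕ => Iic (c - 1/((n:ℝ)+1)) := by
      intro n m hnm
      refine Iic_subset_Iic.2 (by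
        have : 1/((m:ℝ)+1) ≤ 1/((n:ℝ)+1) := by
          apply one_div_le_one_div_of_le (by positivity)
          exact_mod_cast add_le_add_left (Nat.cast_le.2 hnm) 1
        linarith)
    have h6 : Filter.Tendsto (μ ∘ fun n : ℕ => Iic (c - 1/((n:ℝ)+1))) Filter.atTop
        (nhds (μ (⋃ n : ℕ, Iic (c - 1/((n:ℝ)+1))))) := tendsto_measure_iUnion_atTop hmono
    rw [← hun] at h6
    refine le_of_tendsto' h6 fun n => ?_
    have hnot : c - 1/((n:ℝ)+1) ∉ S := by
      intro hmem
      have := csInf_le hSbdd hmem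
      have hpos : (0:ℝ) < 1/((n:ℝ)+1) := by positivity
      rw [← hc] at this
      linarith
    exact le_of_not_ge hnot
  · have hmap : π {x | c < f x} = μ (Ioi c) := by
      rw [hμ, Measure.map_apply hf measurableSet_Ioi]; rfl
    rw [hmap]
    have hun : Ioi c = ⋃ n : ℕ, Ioi (c + 1/((n:ℝ)+1)) := by
      ext x
      simp only [mem_Ioi, mem_iUnion]
      constructor
      · intro hx
        obtain ⟨n, hn⟩ := exists_nat_one_div_lt (sub_pos.2 hx)
        exact ⟨n, by linarith⟩
      · rintro ⟨n, hn⟩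
        have : (0:ℝ) < 1/((n:ℝ)+1) := by positivity
        linarith
    have hmono : Monotone fun n : ℕ => Ioi (c + 1/((n:ℝ)+1)) := by
      intro n m hnm
      refine Ioi_subset_Ioi (by
        have : 1/((m:ℝ)+1) ≤ 1/((n:ℝ)+1) := by
          apply one_div_le_one_div_of_le (by positivity)
          exact_mod_cast add_le_add_left (Nat.cast_le.2 hnm) 1
        linarith)
    have h6 : Filter.Tendsto (μ ∘ fun n : ℕ => Ioi (c + 1/((n:ℝ)+1))) Filter.atTop
        (nhds (μ (⋃ n : ℕ, Ioi (c + 1/((n:ℝ)+1))))) := tendsto_measure_iUnion_atTop hmono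
    rw [← hun] at h6
    refine le_of_tendsto' h6 fun n => ?_
    have hlt : c < c + 1/((n:ℝ)+1) := by
      have : (0:ℝ) < 1/((n:ℝ)+1) := by positivity
      linarith
    obtain ⟨u, huS, hu⟩ := exists_lt_of_csInf_lt hSne (hc ▸ hlt)
    exact le_trans (measure_mono (Ioi_subset_Ioi hu.le)) (hIoi u huS)


lemma aux_xor_iff {a b t : ℝ} :
    ((t < a ∧ ¬ t < b) ∨ (¬ t < a ∧ t < b)) ↔ (min a b ≤ t ∧ t < max a b) := by
  constructor
  · rintro (⟨h1, h2⟩ | ⟨h1, h2⟩)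
    · exact ⟨le_trans (min_le_right a b) (not_lt.1 h2), lt_of_lt_of_le h1 (le_max_left a b)⟩
    · exact ⟨le_trans (min_le_left a b) (not_lt.1 h1), lt_of_lt_of_le h2 (le_max_right a b)⟩
  · rintro ⟨h1, h2⟩
    rcases lt_or_ge t a with ha | ha
    · left
      refine ⟨ha, not_lt.2 ?_⟩
      by_contra hb
      push_neg at hb
      exact absurd h1 (not_le.2 (lt_min ha hb))
    · right
      refine ⟨not_lt.2 ha, ?_⟩
      rcases lt_max_iff.1 h2 with h | h
      · exact absurd h (not_lt.2 ha)
      · exact h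

/-- Key estimate for a nonnegative function supported on a set of measure at most 1/2. -/
lemma aux_half {E : Type*} [MeasurableSpace E] (π : Measure E) [IsProbabilityMeasure π]
    (J : Measure (E × E)) [IsFiniteMeasure J] (hsym : Measure.map Prod.swap J = J)
    (M : ℝ) (hM : 0 < M) (hnorm : Measure.map Prod.fst J ≤ (ENNReal.ofReal M) • π)
    (k : ℝ) (hk0 : 0 ≤ k) (hkM : k ≤ M)
    (key : ∀ A : Set E, MeasurableSet A → π A ≤ 1 / 2 →
      ENNReal.ofReal k * π A ≤ J (A ×ˢ Aᶜ))
    (g : E → ℝ) (hgm : Measurable g) (hg0 : ∀ x, 0 ≤ g x)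
    (hsupp : π {x | g x ≠ 0} ≤ 1 / 2)
    (hP : ∫⁻ x, ENNReal.ofReal (g x ^ 2) ∂π ≠ ∞)
    (hD : ∫⁻ p, ENNReal.ofReal ((g p.1 - g p.2) ^ 2) ∂J ≠ ∞) :
    ENNReal.ofReal (2 * (M - Real.sqrt (M ^ 2 - k ^ 2))) * ∫⁻ x, ENNReal.ofReal (g x ^ 2) ∂π
      ≤ ∫⁻ p, ENNReal.ofReal ((g p.1 - g p.2) ^ 2) ∂J := by
  set G : E → ℝ := fun x => g x ^ 2 with hGdef
  have hGm : Measurable G := hgm.pow_const 2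
  have hG0 : ∀ x, 0 ≤ G x := fun x => sq_nonneg _
  set P := ∫⁻ x, ENNReal.ofReal (G x) ∂π with hPdef
  set D := ∫⁻ p, ENNReal.ofReal ((g p.1 - g p.2) ^ 2) ∂J with hDdef
  set Q := ∫⁻ p, ENNReal.ofReal ((g p.1 + g p.2) ^ 2) ∂J with hQdef
  set T := ∫⁻ p, ENNReal.ofReal |G p.1 - G p.2| ∂J with hTdef
  set R := ∫⁻ p, ENNReal.ofReal (G p.1) ∂J with hRdef
  -- the first marginal bound
  have hR : R ≤ ENNReal.ofReal M * P := by
    have h1 : R = ∫⁻ x, ENNReal.ofReal (G x) ∂(Measure.map Prod.fst J) := by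
      rw [lintegral_map hGm.ennreal_ofReal measurable_fst]
    rw [h1]
    calc ∫⁻ x, ENNReal.ofReal (G x) ∂(Measure.map Prod.fst J)
        ≤ ∫⁻ x, ENNReal.ofReal (G x) ∂((ENNReal.ofReal M) • π) := lintegral_mono' hnorm le_rfl
      _ = ENNReal.ofReal M * P := lintegral_smul_measure _ _
  have hRtop : R ≠ ∞ := ne_top_of_le_ne_top (ENNReal.mul_ne_top ENNReal.ofReal_ne_top hP) hR
  -- the second marginal equals the first
  have hR' : ∫⁻ p, ENNReal.ofReal (G p.2) ∂J = R := by
    conv_lhs => rw [← hsym]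
    rw [lintegral_map (f := fun p : E × E => ENNReal.ofReal (G p.2)) (by fun_prop)
      measurable_swap]
    rfl
  -- parallelogram-type identity
  have hQD : Q + D = 4 * R := by
    have h2 : ∀ p : E × E,
        ENNReal.ofReal ((g p.1 + g p.2) ^ 2) + ENNReal.ofReal ((g p.1 - g p.2) ^ 2)
          = 2 * ENNReal.ofReal (G p.1) + 2 * ENNReal.ofReal (G p.2) := by
      intro p
      rw [← ENNReal.ofReal_add (sq_nonneg _) (sq_nonneg _)]
      have h3 : (2:ℝ≥0∞) * ENNReal.ofReal (G p.1) + 2 * ENNReal.ofReal (G p.2)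
          = ENNReal.ofReal (2 * G p.1 + 2 * G p.2) := by
        rw [ENNReal.ofReal_add (by positivity) (by positivity),
          ENNReal.ofReal_mul (by norm_num), ENNReal.ofReal_mul (by norm_num),
          ENNReal.ofReal_ofNat]
      rw [h3]
      congr 1
      simp only [hGdef]
      ring
    calc Q + D = ∫⁻ p, (ENNReal.ofReal ((g p.1 + g p.2) ^ 2)
          + ENNReal.ofReal ((g p.1 - g p.2) ^ 2)) ∂J := by
          rw [lintegral_add_left (f := fun p : E × E => ENNReal.ofReal ((g p.1 + g p.2) ^ 2))
            (by fun_prop)]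
      _ = ∫⁻ p, (2 * ENNReal.ofReal (G p.1) + 2 * ENNReal.ofReal (G p.2)) ∂J :=
          lintegral_congr h2
      _ = 2 * R + 2 * ∫⁻ p, ENNReal.ofReal (G p.2) ∂J := by
          rw [lintegral_add_left (f := fun p : E × E => 2 * ENNReal.ofReal (G p.1))
            (by fun_prop), lintegral_const_mul' _ _ (by norm_num),
            lintegral_const_mul' _ _ (by norm_num)]
      _ = 4 * R := by rw [hR']; ring
  have hQtop : Q ≠ ∞ := by
    intro h
    apply hRtop
    have : Q ≤ 4 * R := hQD ▸ le_self_add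
    rw [h] at this
    have h4 : (4:ℝ≥0∞) * R = ∞ := top_le_iff.1 this
    rcases ENNReal.mul_eq_top.1 h4 with ⟨_, h5⟩ | ⟨h5, _⟩
    · exact h5
    · norm_num at h5
  -- coarea estimate : 2 k P ≤ T
  set A : ℝ → Set E := fun t => {x | t < G x} with hAdef
  have hA : ∀ t, MeasurableSet (A t) := fun t => measurableSet_lt measurable_const hGm
  have layer : P = ∫⁻ t in Ioi 0, π (A t) :=
    lintegral_eq_lintegral_meas_lt π (Filter.Eventually.of_forall hG0) hGm.aemeasurable
  set S : ℝ → Set (E × E) := fun t => (A t ×ˢ (A t)ᶜ) ∪ ((A t)ᶜ ×ˢ A t) with hSdef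
  have hSmeas : ∀ t, MeasurableSet (S t) :=
    fun t => ((hA t).prod (hA t).compl).union ((hA t).compl.prod (hA t))
  have core : ∀ t ∈ Ioi (0:ℝ), 2 * ENNReal.ofReal k * π (A t) ≤ J (S t) := by
    intro t ht
    have hA12 : π (A t) ≤ 1 / 2 := by
      refine le_trans (measure_mono ?_) hsupp
      intro x hx
      simp only [hAdef, mem_setOf_eq] at hx ⊢
      intro h0
      rw [hGdef] at hx
      simp only [h0] at hx
      norm_num at hx
      exact absurd hx (not_lt.2 (le_of_lt ht))
    have hdisj : Disjoint (A t ×ˢ (A t)ᶜ) ((A t)ᶜ ×ˢ A t) := by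
      rw [Set.disjoint_left]
      rintro p ⟨hp1, _⟩ ⟨hp1', _⟩
      exact hp1' hp1
    have hJS : J (S t) = J (A t ×ˢ (A t)ᶜ) + J ((A t)ᶜ ×ˢ A t) :=
      measure_union hdisj ((hA t).compl.prod (hA t))
    have hswap : J ((A t)ᶜ ×ˢ A t) = J (A t ×ˢ (A t)ᶜ) := by
      have h7 : (A t)ᶜ ×ˢ A t = Prod.swap ⁻¹' (A t ×ˢ (A t)ᶜ) := by
        ext p
        simp only [mem_prod, mem_preimage, Prod.fst_swap, Prod.snd_swap, mem_compl_iff]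
        tauto
      rw [h7, ← Measure.map_apply measurable_swap ((hA t).prod (hA t).compl), hsym]
    rw [hJS, hswap, two_mul, add_mul]
    exact add_le_add (key (A t) (hA t) hA12) (key (A t) (hA t) hA12)
  -- Tonelli
  have big : ∫⁻ t in Ioi 0, J (S t) ≤ T := by
    set 𝒮 : Set (ℝ × (E × E)) := {q | q.2 ∈ S q.1} with h𝒮def
    have h𝒮 : MeasurableSet 𝒮 := by
      have hU : MeasurableSet {q : ℝ × (E × E) | q.1 < G q.2.1} :=
        measurableSet_lt measurable_fst (hGm.comp (measurable_fst.comp measurable_snd))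
      have hV : MeasurableSet {q : ℝ × (E × E) | q.1 < G q.2.2} :=
        measurableSet_lt measurable_fst (hGm.comp (measurable_snd.comp measurable_snd))
      have h8 : 𝒮 = ({q : ℝ × (E × E) | q.1 < G q.2.1} ∩ {q | q.1 < G q.2.2}ᶜ)
          ∪ ({q | q.1 < G q.2.1}ᶜ ∩ {q | q.1 < G q.2.2}) := by
        ext q
        simp only [h𝒮def, hSdef, hAdef, mem_setOf_eq, mem_union, mem_prod, mem_compl_iff,
          mem_inter_iff]
        try tauto
      exact h8 ▸ ((hU.inter hV.compl).union (hU.compl.inter hV))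
    have hFm : Measurable (𝒮.indicator (1 : ℝ × (E × E) → ℝ≥0∞)) :=
      measurable_one.indicator h𝒮
    calc ∫⁻ t in Ioi 0, J (S t)
        = ∫⁻ t in Ioi 0, ∫⁻ p, 𝒮.indicator 1 (t, p) ∂J := by
          refine lintegral_congr fun t => ?_
          rw [show (fun p => 𝒮.indicator (1 : ℝ × (E × E) → ℝ≥0∞) (t, p))
              = (S t).indicator (1 : (E × E) → ℝ≥0∞) from funext fun p => by
            by_cases h : p ∈ S t
            · simp [Set.indicator, h𝒮def, h]
            · simp [Set.indicator, h𝒮def, h]]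
          rw [lintegral_indicator_one (hSmeas t)]
      _ = ∫⁻ p, ∫⁻ t, 𝒮.indicator 1 (t, p) ∂(volume.restrict (Ioi 0)) ∂J := by
          refine lintegral_lintegral_swap ?_
          have : Function.uncurry (fun (t : ℝ) (p : E × E) =>
              𝒮.indicator (1 : ℝ × (E × E) → ℝ≥0∞) (t, p)) = 𝒮.indicator 1 :=
            funext fun q => by cases q; rfl
          rw [this]
          exact hFm.aemeasurable
      _ ≤ T := by
          refine lintegral_mono fun p => ?_
          have hW : (fun t : ℝ => 𝒮.indicator (1 : ℝ × (E × E) → ℝ≥0∞) (t, p))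
              = (Ico (min (G p.1) (G p.2)) (max (G p.1) (G p.2))).indicator 1 := by
            funext t
            have hiff : (t, p) ∈ 𝒮 ↔ t ∈ Ico (min (G p.1) (G p.2)) (max (G p.1) (G p.2)) := by
              simp only [h𝒮def, hSdef, hAdef, mem_setOf_eq, mem_union, mem_prod, mem_compl_iff,
                mem_Ico]
              exact aux_xor_iff
            by_cases h : (t, p) ∈ 𝒮
            · simp [Set.indicator_of_mem h, Set.indicator_of_mem (hiff.1 h)]
            · simp [Set.indicator_of_notMem h,
                Set.indicator_of_notMem (fun h' => h (hiff.2 h'))]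
          rw [hW, lintegral_indicator_one measurableSet_Ico, Measure.restrict_apply
            measurableSet_Ico]
          set m := min (G p.1) (G p.2) with hm
          set Mx := max (G p.1) (G p.2) with hMx
          have hm0 : 0 ≤ m := le_min (hG0 _) (hG0 _)
          have hle : volume (Ico m Mx ∩ Ioi 0) ≤ ENNReal.ofReal (Mx - m) := by
            refine le_trans (measure_mono inter_subset_left) ?_
            rw [Real.volume_Ico]
          have hge : ENNReal.ofReal (Mx - m) ≤ volume (Ico m Mx ∩ Ioi 0) := by
            rw [← Real.volume_Ioo (a := m) (b := Mx)]
            refine measure_mono fun x hx => ?_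
            exact ⟨⟨hx.1.le, hx.2⟩, lt_of_le_of_lt hm0 hx.1⟩
          have := le_antisymm hle hge
          rw [this]
          have : Mx - m = |G p.1 - G p.2| := by
            rw [hm, hMx, max_sub_min_eq_abs]
            exact abs_sub_comm _ _
          rw [this]
  have coarea : 2 * ENNReal.ofReal k * P ≤ T := by
    calc 2 * ENNReal.ofReal k * P = ∫⁻ t in Ioi 0, 2 * ENNReal.ofReal k * π (A t) := by
          rw [layer, ← lintegral_const_mul' _ _ (by
            exact ENNReal.mul_ne_top (by norm_num) ENNReal.ofReal_ne_top)]
      _ ≤ ∫⁻ t in Ioi 0, J (S t) := setLIntegral_mono' measurableSet_Ioi core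
      _ ≤ T := big
  -- Cauchy-Schwarz
  have hCS : T ≤ D ^ (1/2 : ℝ) * Q ^ (1/2 : ℝ) := by
    have hpt : ∀ p : E × E, ENNReal.ofReal |G p.1 - G p.2|
        = ENNReal.ofReal |g p.1 - g p.2| * ENNReal.ofReal (g p.1 + g p.2) := by
      intro p
      rw [← ENNReal.ofReal_mul (abs_nonneg _)]
      congr 1
      rw [hGdef]
      have h9 : |g p.1 ^ 2 - g p.2 ^ 2| = |g p.1 - g p.2| * |g p.1 + g p.2| := by
        rw [← abs_mul]
        congr 1
        ring
      rw [h9, abs_of_nonneg (add_nonneg (hg0 _) (hg0 _))]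
    have hconj : Real.HolderConjugate 2 2 := ⟨by norm_num, by norm_num, by norm_num⟩
    have hHolder := ENNReal.lintegral_mul_le_Lp_mul_Lq J hconj
      (f := fun p : E × E => ENNReal.ofReal |g p.1 - g p.2|)
      (g := fun p : E × E => ENNReal.ofReal (g p.1 + g p.2))
      (by fun_prop) (by fun_prop)
    have e1 : ∫⁻ p, (ENNReal.ofReal |g p.1 - g p.2|) ^ (2:ℝ) ∂J = D := by
      rw [hDdef]
      refine lintegral_congr fun p => ?_
      rw [ENNReal.ofReal_rpow_of_nonneg (abs_nonneg _) (by norm_num : (0:ℝ) ≤ 2)]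
      congr 1
      rw [show ((2:ℝ)) = ((2:ℕ):ℝ) by norm_num, Real.rpow_natCast, sq_abs]
    have e2 : ∫⁻ p, (ENNReal.ofReal (g p.1 + g p.2)) ^ (2:ℝ) ∂J = Q := by
      rw [hQdef]
      refine lintegral_congr fun p => ?_
      rw [ENNReal.ofReal_rpow_of_nonneg (add_nonneg (hg0 _) (hg0 _)) (by norm_num : (0:ℝ) ≤ 2)]
      congr 1
      rw [show ((2:ℝ)) = ((2:ℕ):ℝ) by norm_num, Real.rpow_natCast]
    calc T = ∫⁻ p, ENNReal.ofReal |g p.1 - g p.2| * ENNReal.ofReal (g p.1 + g p.2) ∂J :=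
          lintegral_congr hpt
      _ ≤ (∫⁻ p, (ENNReal.ofReal |g p.1 - g p.2|) ^ (2:ℝ) ∂J) ^ (1/2 : ℝ)
          * (∫⁻ p, (ENNReal.ofReal (g p.1 + g p.2)) ^ (2:ℝ) ∂J) ^ (1/2 : ℝ) := hHolder
      _ = D ^ (1/2 : ℝ) * Q ^ (1/2 : ℝ) := by rw [e1, e2]
  -- pass to real numbers
  set t := Real.sqrt (M ^ 2 - k ^ 2) with htdef
  have ht0 : 0 ≤ t := Real.sqrt_nonneg _
  have htM : t ≤ M := by
    rw [htdef]
    calc Real.sqrt (M ^ 2 - k ^ 2) ≤ Real.sqrt (M ^ 2) :=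
          Real.sqrt_le_sqrt (by nlinarith)
      _ = M := Real.sqrt_sq hM.le
  set pr := P.toReal with hpr
  set dr := D.toReal with hdr
  set qr := Q.toReal with hqr
  have hpr0 : 0 ≤ pr := ENNReal.toReal_nonneg
  have hdr0 : 0 ≤ dr := ENNReal.toReal_nonneg
  have hqr0 : 0 ≤ qr := ENNReal.toReal_nonneg
  have hDhalf : D ^ (1/2 : ℝ) ≠ ∞ := by
    exact ENNReal.rpow_ne_top_of_nonneg (by norm_num) hD
  have hQhalf : Q ^ (1/2 : ℝ) ≠ ∞ := by
    exact ENNReal.rpow_ne_top_of_nonneg (by norm_num) hQtop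
  have h1 : 2 * k * pr ≤ Real.sqrt dr * Real.sqrt qr := by
    have h10 := ENNReal.toReal_mono (ENNReal.mul_ne_top hDhalf hQhalf) (coarea.trans hCS)
    rw [ENNReal.toReal_mul, ENNReal.toReal_mul, ENNReal.toReal_mul] at h10
    rw [ENNReal.toReal_ofReal hk0] at h10
    rw [← ENNReal.toReal_rpow, ← ENNReal.toReal_rpow] at h10
    rw [← Real.sqrt_eq_rpow, ← Real.sqrt_eq_rpow] at h10
    simpa using h10
  have h2 : qr + dr ≤ 4 * M * pr := by
    have h11 : Q + D ≤ 4 * (ENNReal.ofReal M * P) := by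
      rw [hQD]
      exact mul_le_mul_right hR 4
    have h12 := ENNReal.toReal_mono (by
      exact ENNReal.mul_ne_top (by norm_num) (ENNReal.mul_ne_top ENNReal.ofReal_ne_top hP)) h11
    rw [ENNReal.toReal_add hQtop hD, ENNReal.toReal_mul, ENNReal.toReal_mul,
      ENNReal.toReal_ofReal hM.le] at h12
    simpa [mul_assoc] using h12
  -- the quadratic estimate
  have hfinal : 2 * (M - t) * pr ≤ dr := by
    have hsq : (2 * k * pr) ^ 2 ≤ dr * qr := by
      have h13 : (2 * k * pr) ^ 2 ≤ (Real.sqrt dr * Real.sqrt qr) ^ 2 :=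
        pow_le_pow_left₀ (by positivity) h1 2
      have h13b : (Real.sqrt dr * Real.sqrt qr) ^ 2 = dr * qr := by
        rw [mul_pow, Real.sq_sqrt hdr0, Real.sq_sqrt hqr0]
      linarith
    have h14 : 4 * k ^ 2 * pr ^ 2 ≤ dr * (4 * M * pr - dr) := by
      nlinarith [mul_le_mul_of_nonneg_left (show qr ≤ 4 * M * pr - dr by linarith) hdr0]
    have ht2 : t ^ 2 = M ^ 2 - k ^ 2 := Real.sq_sqrt (by nlinarith)
    have h4 : (dr - 2 * M * pr) ^ 2 ≤ (2 * t * pr) ^ 2 := by nlinarith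
    have h5 : |dr - 2 * M * pr| ≤ 2 * t * pr := by
      have h15 := Real.sqrt_le_sqrt h4
      rwa [Real.sqrt_sq_eq_abs, Real.sqrt_sq (by positivity)] at h15
    have h16 := neg_abs_le (dr - 2 * M * pr)
    linarith
  -- back to ENNReal
  calc ENNReal.ofReal (2 * (M - Real.sqrt (M ^ 2 - k ^ 2))) * P
      = ENNReal.ofReal (2 * (M - t)) * ENNReal.ofReal pr := by
        rw [hpr, ENNReal.ofReal_toReal hP]
    _ = ENNReal.ofReal (2 * (M - t) * pr) := by
        rw [← ENNReal.ofReal_mul (show (0:ℝ) ≤ 2 * (M - t) by nlinarith)]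
    _ ≤ ENNReal.ofReal dr := ENNReal.ofReal_le_ofReal hfinal
    _ = D := ENNReal.ofReal_toReal hD

lemma aux_max_sub (w : ℝ) : max w 0 - max (-w) 0 = w := by
  rcases le_total w 0 with h | h
  · rw [max_eq_right h, max_eq_left (neg_nonneg.2 h)]; ring
  · rw [max_eq_left h, max_eq_right (neg_nonpos.2 h)]; ring

lemma aux_max_sq (w : ℝ) : max w 0 ^ 2 + max (-w) 0 ^ 2 = w ^ 2 := by
  rcases le_total w 0 with h | h
  · rw [max_eq_right h, max_eq_left (neg_nonneg.2 h)]; ring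
  · rw [max_eq_left h, max_eq_right (neg_nonpos.2 h)]; ring

lemma aux_prod_nonpos (u v : ℝ) :
    (max u 0 - max v 0) * (max (-u) 0 - max (-v) 0) ≤ 0 := by
  rcases le_total u 0 with hu | hu <;> rcases le_total v 0 with hv | hv
  · rw [max_eq_right hu, max_eq_right hv]; ring_nf; exact le_rfl
  · rw [max_eq_right hu, max_eq_left hv, max_eq_left (neg_nonneg.2 hu),
      max_eq_right (neg_nonpos.2 hv)]
    nlinarith
  · rw [max_eq_left hu, max_eq_right hv, max_eq_right (neg_nonpos.2 hu),
      max_eq_left (neg_nonneg.2 hv)]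
    nlinarith
  · rw [max_eq_left hu, max_eq_left hv, max_eq_right (neg_nonpos.2 hu),
      max_eq_right (neg_nonpos.2 hv)]
    ring_nf
    exact le_rfl

/-- Improved Cheeger inequality (1.12) for bounded forms: if `J(dx,E) ≤ M π(dx)`
and `K = 0`, then `λ₁ ≥ M(1 − √(1 − k'²/M²)) ≥ k'²/(2M)`. -/
theorem stmt10 {E : Type*} [MeasurableSpace E] (π : Measure E) [IsProbabilityMeasure π]
    (J : Measure (E × E)) (hsym : Measure.map Prod.swap J = J)
    (hdiag : J {p : E × E | p.1 = p.2} = 0)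
    (M : ℝ) (hM : 0 < M)
    (hnorm : Measure.map Prod.fst J ≤ (ENNReal.ofReal M) • π)
    (k' : ℝ≥0∞)
    (hk' : k' = ⨅ A ∈ {A : Set E | MeasurableSet A ∧ 0 < π A ∧ π A ≤ 1 / 2},
        J (A ×ˢ Aᶜ) / π A)
    (lam1 : ℝ≥0∞)
    (hlam1 : lam1 = sInf {r | ∃ f : E → ℝ, Measurable f ∧ (∫ x, f x ∂π) = 0 ∧
        (∫ x, (f x) ^ 2 ∂π) = 1 ∧
        r = (1 / 2 : ℝ≥0∞) * ∫⁻ p, ENNReal.ofReal ((f p.1 - f p.2) ^ 2) ∂J}) :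
    ENNReal.ofReal (M * (1 - Real.sqrt (1 - k'.toReal ^ 2 / M ^ 2))) ≤ lam1 ∧
    M * (1 - Real.sqrt (1 - k'.toReal ^ 2 / M ^ 2))
      = k'.toReal ^ 2 / (M * (1 + Real.sqrt (1 - k'.toReal ^ 2 / M ^ 2))) ∧
    k'.toReal ^ 2 / (2 * M) ≤ M * (1 - Real.sqrt (1 - k'.toReal ^ 2 / M ^ 2)) := by
  set k := k'.toReal with hk
  have hk0 : 0 ≤ k := ENNReal.toReal_nonneg
  haveI hJfin : IsFiniteMeasure J := by
    constructor
    have h1 : J univ = Measure.map Prod.fst J univ := by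
      rw [Measure.map_apply measurable_fst MeasurableSet.univ, preimage_univ]
    rw [h1]
    calc Measure.map Prod.fst J univ ≤ (ENNReal.ofReal M • π) univ := Measure.le_iff'.1 hnorm univ
      _ = ENNReal.ofReal M := by simp
      _ < ∞ := ENNReal.ofReal_lt_top
  have hbound : ∀ A : Set E, MeasurableSet A → J (A ×ˢ Aᶜ) ≤ ENNReal.ofReal M * π A := by
    intro A hA
    calc J (A ×ˢ Aᶜ) ≤ J (Prod.fst ⁻¹' A) := measure_mono (fun p hp => hp.1)
      _ = Measure.map Prod.fst J A := (Measure.map_apply measurable_fst hA).symm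
      _ ≤ (ENNReal.ofReal M • π) A := Measure.le_iff'.1 hnorm A
      _ = ENNReal.ofReal M * π A := by simp
  have hkM : k ≤ M := by
    by_cases hne : ∃ A : Set E, MeasurableSet A ∧ 0 < π A ∧ π A ≤ 1 / 2
    · obtain ⟨A, hAm, hA0, hA12⟩ := hne
      have h2 : k' ≤ J (A ×ˢ Aᶜ) / π A := by
        rw [hk']
        exact iInf₂_le A ⟨hAm, hA0, hA12⟩
      have h3 : J (A ×ˢ Aᶜ) / π A ≤ ENNReal.ofReal M :=
        ENNReal.div_le_of_le_mul (hbound A hAm)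
      calc k = k'.toReal := rfl
        _ ≤ (ENNReal.ofReal M).toReal := ENNReal.toReal_mono ENNReal.ofReal_ne_top (h2.trans h3)
        _ = M := ENNReal.toReal_ofReal hM.le
    · have htop : k' = ∞ := by
        rw [hk']
        refine le_antisymm le_top ?_
        refine le_iInf fun A => le_iInf fun hA => ?_
        exact absurd ⟨A, hA.1, hA.2.1, hA.2.2⟩ hne
      rw [hk, htop]
      simpa using hM.le
  have key : ∀ A : Set E, MeasurableSet A → π A ≤ 1 / 2 →
      ENNReal.ofReal k * π A ≤ J (A ×ˢ Aᶜ) := by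
    intro A hA hA12
    rcases eq_or_lt_of_le (zero_le : 0 ≤ π A) with h0 | h0
    · rw [← h0, mul_zero]; exact zero_le
    · have h2 : k' ≤ J (A ×ˢ Aᶜ) / π A := by
        rw [hk']
        exact iInf₂_le A ⟨hA, h0, hA12⟩
      have h5 : ENNReal.ofReal k ≤ J (A ×ˢ Aᶜ) / π A :=
        le_trans ENNReal.ofReal_toReal_le h2
      calc ENNReal.ofReal k * π A ≤ (J (A ×ˢ Aᶜ) / π A) * π A := mul_le_mul_left h5 _
        _ = J (A ×ˢ Aᶜ) := ENNReal.div_mul_cancel h0.ne' (measure_ne_top π A)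
  set s := Real.sqrt (1 - k ^ 2 / M ^ 2) with hs
  have hs0 : 0 ≤ s := Real.sqrt_nonneg _
  have harg : 0 ≤ 1 - k ^ 2 / M ^ 2 := by
    rw [sub_nonneg, div_le_one (by positivity)]
    nlinarith
  have hs2 : s ^ 2 = 1 - k ^ 2 / M ^ 2 := Real.sq_sqrt harg
  have hs1 : s ≤ 1 := by nlinarith [hs2, hs0, div_nonneg (sq_nonneg k) (sq_nonneg M)]
  have hts : Real.sqrt (M ^ 2 - k ^ 2) = M * s := by
    rw [hs, show M ^ 2 - k ^ 2 = M ^ 2 * (1 - k ^ 2 / M ^ 2) by field_simp,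
      Real.sqrt_mul (sq_nonneg M), Real.sqrt_sq hM.le]
  have part2 : M * (1 - s) = k ^ 2 / (M * (1 + s)) := by
    have hden : M * (1 + s) ≠ 0 := by positivity
    rw [eq_div_iff hden]
    have hMs : M ^ 2 * s ^ 2 = M ^ 2 - k ^ 2 := by
      rw [hs2]; field_simp
    linear_combination (-1 : ℝ) * hMs
  refine ⟨?_, part2, ?_⟩
  · -- main spectral gap bound
    rw [hlam1]
    refine le_sInf fun r hr => ?_
    obtain ⟨f, hfm, hf0, hf2, rfl⟩ := hr
    set Lf := ∫⁻ p, ENNReal.ofReal ((f p.1 - f p.2) ^ 2) ∂J with hLf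
    by_cases hLtop : Lf = ∞
    · rw [hLtop, ENNReal.mul_top (by norm_num)]
      exact le_top
    have hif2 : Integrable (fun x => f x ^ 2) π := by
      by_contra hni
      rw [integral_undef hni] at hf2
      norm_num at hf2
    have hif : Integrable f π := by
      refine Integrable.mono' (hif2.add (integrable_const 1)) hfm.aestronglyMeasurable ?_
      refine Filter.Eventually.of_forall fun x => ?_
      rw [Real.norm_eq_abs]
      simp only [Pi.add_apply]
      nlinarith [sq_nonneg (|f x| - 1), sq_abs (f x)]
    obtain ⟨c, hc1, hc2⟩ := aux_median π f hfm
    set gp : E → ℝ := fun x => max (f x - c) 0 with hgp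
    set gm : E → ℝ := fun x => max (c - f x) 0 with hgm2
    have hgpm : Measurable gp := (hfm.sub measurable_const).max measurable_const
    have hgmm : Measurable gm := (measurable_const.sub hfm).max measurable_const
    have hgp0 : ∀ x, 0 ≤ gp x := fun x => le_max_right _ _
    have hgm0 : ∀ x, 0 ≤ gm x := fun x => le_max_right _ _
    have hsupp_p : π {x | gp x ≠ 0} ≤ 1 / 2 := by
      refine le_trans (measure_mono ?_) hc2
      intro x hx
      simp only [hgp, mem_setOf_eq] at hx ⊢
      by_contra hcf
      push_neg at hcf
      exact hx (max_eq_right (by linarith))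
    have hsupp_m : π {x | gm x ≠ 0} ≤ 1 / 2 := by
      refine le_trans (measure_mono ?_) hc1
      intro x hx
      simp only [hgm2, mem_setOf_eq] at hx ⊢
      by_contra hcf
      push_neg at hcf
      exact hx (max_eq_right (by linarith))
    -- pointwise comparison of Dirichlet integrands
    have hpoint : ∀ p : E × E,
        (gp p.1 - gp p.2) ^ 2 + (gm p.1 - gm p.2) ^ 2 ≤ (f p.1 - f p.2) ^ 2 := by
      intro p
      have h20 := aux_prod_nonpos (f p.1 - c) (f p.2 - c)
      have h21 := aux_max_sub (f p.1 - c)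
      have h22 := aux_max_sub (f p.2 - c)
      have hgme1 : gm p.1 = max (-(f p.1 - c)) 0 := by rw [hgm2]; ring_nf
      have hgme2 : gm p.2 = max (-(f p.2 - c)) 0 := by rw [hgm2]; ring_nf
      rw [hgp, hgme1, hgme2]
      set a := max (f p.1 - c) 0 - max (f p.2 - c) 0 with ha
      set b := max (-(f p.1 - c)) 0 - max (-(f p.2 - c)) 0 with hb
      have hab : a - b = f p.1 - f p.2 := by rw [ha, hb]; linarith [h21, h22]
      have hgl : a ^ 2 + b ^ 2 ≤ (a - b) ^ 2 := by nlinarith [h20]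
      calc a ^ 2 + b ^ 2 ≤ (a - b) ^ 2 := hgl
        _ = (f p.1 - f p.2) ^ 2 := by rw [hab]
    have hDp_le : (∫⁻ p, ENNReal.ofReal ((gp p.1 - gp p.2) ^ 2) ∂J)
        + (∫⁻ p, ENNReal.ofReal ((gm p.1 - gm p.2) ^ 2) ∂J) ≤ Lf := by
      rw [← lintegral_add_left (f := fun p : E × E => ENNReal.ofReal ((gp p.1 - gp p.2) ^ 2))
        (by fun_prop)]
      refine lintegral_mono fun p => ?_
      rw [← ENNReal.ofReal_add (sq_nonneg _) (sq_nonneg _)]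
      exact ENNReal.ofReal_le_ofReal (hpoint p)
    have hDp : (∫⁻ p, ENNReal.ofReal ((gp p.1 - gp p.2) ^ 2) ∂J) ≠ ∞ :=
      ne_top_of_le_ne_top hLtop (le_trans le_self_add hDp_le)
    have hDm : (∫⁻ p, ENNReal.ofReal ((gm p.1 - gm p.2) ^ 2) ∂J) ≠ ∞ :=
      ne_top_of_le_ne_top hLtop (le_trans le_add_self hDp_le)
    -- the squares sum up
    have hfc2 : Integrable (fun x => (f x - c) ^ 2) π := by
      have heq : (fun x => (f x - c) ^ 2) = fun x => (f x ^ 2 - 2 * c * f x) + c ^ 2 := by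
        funext x; ring
      rw [heq]
      exact (hif2.sub (hif.const_mul (2 * c))).add (integrable_const _)
    have hsum2 : ∀ x, gp x ^ 2 + gm x ^ 2 = (f x - c) ^ 2 := by
      intro x
      have := aux_max_sq (f x - c)
      have hgme : gm x = max (-(f x - c)) 0 := by rw [hgm2]; ring_nf
      rw [hgp, hgme]
      exact this
    have hPsum : (∫⁻ x, ENNReal.ofReal (gp x ^ 2) ∂π) + (∫⁻ x, ENNReal.ofReal (gm x ^ 2) ∂π)
        = ENNReal.ofReal (1 + c ^ 2) := by
      rw [← lintegral_add_left (f := fun x => ENNReal.ofReal (gp x ^ 2)) (by fun_prop)]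
      have hng : ∀ x, ENNReal.ofReal (gp x ^ 2) + ENNReal.ofReal (gm x ^ 2)
          = ENNReal.ofReal ((f x - c) ^ 2) := fun x => by
        rw [← ENNReal.ofReal_add (sq_nonneg _) (sq_nonneg _), hsum2 x]
      rw [lintegral_congr hng,
        ← ofReal_integral_eq_lintegral_ofReal hfc2
          (Filter.Eventually.of_forall fun x => sq_nonneg _)]
      congr 1
      have heq : ∫ x, (f x - c) ^ 2 ∂π = ∫ x, ((f x ^ 2 - 2 * c * f x) + c ^ 2) ∂π := by
        congr 1; funext x; ring
      rw [heq, integral_add (f := fun x => f x ^ 2 - 2 * c * f x) (g := fun _ => c ^ 2)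
        (by exact hif2.sub (hif.const_mul (2 * c))) (integrable_const _),
        integral_sub (f := fun x => f x ^ 2) (g := fun x => 2 * c * f x) hif2
        (by exact hif.const_mul (2 * c)), MeasureTheory.integral_const_mul, hf2, hf0, integral_const]
      simp
    have hPp : (∫⁻ x, ENNReal.ofReal (gp x ^ 2) ∂π) ≠ ∞ :=
      ne_top_of_le_ne_top ENNReal.ofReal_ne_top (hPsum ▸ le_self_add)
    have hPm : (∫⁻ x, ENNReal.ofReal (gm x ^ 2) ∂π) ≠ ∞ :=
      ne_top_of_le_ne_top ENNReal.ofReal_ne_top (hPsum ▸ le_add_self)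
    have res_p := aux_half π J hsym M hM hnorm k hk0 hkM key gp hgpm hgp0 hsupp_p hPp hDp
    have res_m := aux_half π J hsym M hM hnorm k hk0 hkM key gm hgmm hgm0 hsupp_m hPm hDm
    have hcomb : ENNReal.ofReal (2 * (M - Real.sqrt (M ^ 2 - k ^ 2)))
        * ENNReal.ofReal (1 + c ^ 2) ≤ Lf := by
      rw [← hPsum, mul_add]
      exact le_trans (add_le_add res_p res_m) hDp_le
    have hMt0 : 0 ≤ M - Real.sqrt (M ^ 2 - k ^ 2) := by
      rw [hts]; nlinarith
    have h1c : (1 : ℝ≥0∞) ≤ ENNReal.ofReal (1 + c ^ 2) := by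
      rw [show (1 : ℝ≥0∞) = ENNReal.ofReal 1 by simp]
      exact ENNReal.ofReal_le_ofReal (by nlinarith)
    have h2' : ENNReal.ofReal (2 * (M - Real.sqrt (M ^ 2 - k ^ 2))) ≤ Lf := by
      calc ENNReal.ofReal (2 * (M - Real.sqrt (M ^ 2 - k ^ 2)))
          = ENNReal.ofReal (2 * (M - Real.sqrt (M ^ 2 - k ^ 2))) * 1 := (mul_one _).symm
        _ ≤ ENNReal.ofReal (2 * (M - Real.sqrt (M ^ 2 - k ^ 2))) * ENNReal.ofReal (1 + c ^ 2) :=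
            mul_le_mul_right h1c _
        _ ≤ Lf := hcomb
    have hgoal_eq : M * (1 - s) = M - Real.sqrt (M ^ 2 - k ^ 2) := by rw [hts]; ring
    rw [hgoal_eq]
    have h40 : ENNReal.ofReal (M - Real.sqrt (M ^ 2 - k ^ 2)) * 2 ≤ Lf := by
      calc ENNReal.ofReal (M - Real.sqrt (M ^ 2 - k ^ 2)) * 2
          = ENNReal.ofReal (M - Real.sqrt (M ^ 2 - k ^ 2)) * ENNReal.ofReal 2 := by
            rw [ENNReal.ofReal_ofNat]
        _ = ENNReal.ofReal ((M - Real.sqrt (M ^ 2 - k ^ 2)) * 2) :=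
            (ENNReal.ofReal_mul hMt0).symm
        _ = ENNReal.ofReal (2 * (M - Real.sqrt (M ^ 2 - k ^ 2))) := by ring_nf
        _ ≤ Lf := h2'
    have hhalf_eq : (1 / 2 : ℝ≥0∞) * Lf = Lf / 2 := by
      rw [one_div, mul_comm, div_eq_mul_inv]
    rw [hhalf_eq, ENNReal.le_div_iff_mul_le (Or.inl (by norm_num)) (Or.inl (by norm_num))]
    exact h40
  · -- k'^2/(2M) ≤ M(1-s)
    rw [part2]
    have h30 : M * (1 + s) ≤ 2 * M := by nlinarith
    have h31 : 0 < M * (1 + s) := by positivity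
    rw [div_le_div_iff₀ (by positivity) h31]
    nlinarith [sq_nonneg k, h30]
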